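/- If the system F of polynomials over F_p has a UENS-refutation, i.e. there exist h ≥ 1 and a set E of unstructured extension polynomials of accuracy h with |E| < e^{h/p} such that 1 lies in the ideal generated by F ∪ E ∪ {r^p - r : r extension variable} in F_p[x,r], then F has no common {0,1}-zero. -/

import Mathlib

open MvPolynomial

open Finset in
lemma uens_count_bad (p M h : ℕ) [Fact p.Prime] (idx : Fin h → Fin M)
    (hinj : Function.Injective idx)
    (v : (Fin M → ZMod p) → Fin h → ZMod p)
    (hv : ∀ b b' : Fin M → ZMod p,
      (∀ s, s ∉ Finset.image idx Finset.univ → b s = b' s) → v b = v b') :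
    (Finset.univ.filter fun b : Fin M → ZMod p => ∀ i, v b i ≠ b (idx i)).card
      ≤ (p - 1) ^ h * p ^ (M - h) := by
  classical
  set S : Finset (Fin M) := Finset.image idx Finset.univ with hS
  have hScard : S.card = h := by
    rw [hS, Finset.card_image_of_injective _ hinj, Finset.card_univ, Fintype.card_fin]
  set T : Finset (Fin h → ZMod p) :=
    Fintype.piFinset (fun _ : Fin h => Finset.univ.erase 0) with hT
  set Z : Finset (Fin M → ZMod p) :=
    Fintype.piFinset (fun s : Fin M => if s ∈ S then ({0} : Finset (ZMod p)) else Finset.univ)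
    with hZ
  have hTcard : T.card = (p - 1) ^ h := by
    rw [hT, Fintype.card_piFinset]
    simp [Finset.card_erase_of_mem, ZMod.card]
  have hZcard : Z.card = p ^ (M - h) := by
    rw [hZ, Fintype.card_piFinset]
    have : ∀ s : Fin M,
        (if s ∈ S then ({0} : Finset (ZMod p)) else Finset.univ).card
          = if s ∈ S then 1 else p := by
      intro s; split <;> simp [ZMod.card]
    simp only [this]
    rw [Finset.prod_ite, Finset.prod_const, Finset.prod_const, one_pow, one_mul]
    congr 1
    have h1 : (Finset.univ.filter (· ∈ S)).card = h := by
      simpa [Finset.filter_univ_mem] using hScard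
    have h2 := Finset.card_filter_add_card_filter_not
      (s := (Finset.univ : Finset (Fin M))) (p := (· ∈ S))
    rw [Finset.card_univ, Fintype.card_fin] at h2
    omega
  have hmaps : ∀ b ∈ (Finset.univ.filter fun b : Fin M → ZMod p => ∀ i, v b i ≠ b (idx i)),
      ((fun i => b (idx i) - v b i, fun s => if s ∈ S then 0 else b s)
        : (Fin h → ZMod p) × (Fin M → ZMod p)) ∈ T ×ˢ Z := by
    intro b hb
    rw [Finset.mem_filter] at hb
    rw [Finset.mem_product]
    constructor
    · rw [hT, Fintype.mem_piFinset]
      intro i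
      simp only [Finset.mem_erase, Finset.mem_univ, and_true]
      exact fun hzero => hb.2 i (by rwa [sub_eq_zero, eq_comm] at hzero)
    · rw [hZ, Fintype.mem_piFinset]
      intro s
      split <;> simp_all
  have hinj2 : Set.InjOn
      (fun b : Fin M → ZMod p =>
        ((fun i => b (idx i) - v b i, fun s => if s ∈ S then 0 else b s)
          : (Fin h → ZMod p) × (Fin M → ZMod p)))
      ((Finset.univ.filter fun b : Fin M → ZMod p => ∀ i, v b i ≠ b (idx i)) : Set _) := by
    intro b hb b' hb' heq
    simp only [Prod.mk.injEq] at heq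
    have hoff : ∀ s, s ∉ S → b s = b' s := by
      intro s hs
      have := congrFun heq.2 s
      simpa [if_neg hs] using this
    have hvv : v b = v b' := hv b b' hoff
    have hon : ∀ i, b (idx i) = b' (idx i) := by
      intro i
      have := congrFun heq.1 i
      rw [hvv] at this
      linear_combination this
    funext s
    by_cases hs : s ∈ S
    · obtain ⟨i, _, rfl⟩ := Finset.mem_image.mp hs
      exact hon i
    · exact hoff s hs
  calc (Finset.univ.filter fun b : Fin M → ZMod p => ∀ i, v b i ≠ b (idx i)).card
      ≤ (T ×ˢ Z).card := Finset.card_le_card_of_injOn _ hmaps hinj2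
    _ = (p - 1) ^ h * p ^ (M - h) := by rw [Finset.card_product, hTcard, hZcard]

lemma uens_exp_bound (p h K : ℕ) (hp : 2 ≤ p) (hK : (K : ℝ) < Real.exp ((h : ℝ) / p)) :
    K * (p - 1) ^ h < p ^ h := by
  have hp0 : (0 : ℝ) < p := by positivity
  have hp1 : (2 : ℝ) ≤ (p : ℝ) := by exact_mod_cast hp
  have key : Real.exp (1 / p) * ((p : ℝ) - 1) ≤ p := by
    have h1 : 1 - 1 / (p : ℝ) ≤ Real.exp (-(1 / p)) := by
      have := Real.add_one_le_exp (-(1 / (p : ℝ))); linarith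
    have h2 : Real.exp (1 / p) * ((p : ℝ) - 1) = Real.exp (1 / p) * (p * (1 - 1 / p)) := by
      field_simp
    rw [h2]
    calc Real.exp (1 / p) * ((p : ℝ) * (1 - 1 / p))
        ≤ Real.exp (1 / p) * ((p : ℝ) * Real.exp (-(1 / p))) := by
          have he : (0 : ℝ) < Real.exp (1 / p) := Real.exp_pos _
          exact mul_le_mul_of_nonneg_left (mul_le_mul_of_nonneg_left h1 hp0.le) he.le
      _ = p := by
          rw [show Real.exp (1 / (p:ℝ)) * ((p:ℝ) * Real.exp (-(1 / (p:ℝ))))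
              = Real.exp (1 / (p:ℝ)) * Real.exp (-(1 / (p:ℝ))) * p by ring,
            ← Real.exp_add]
          simp
  have hexp : Real.exp ((h : ℝ) / p) * ((p : ℝ) - 1) ^ h ≤ (p : ℝ) ^ h := by
    have : Real.exp ((h : ℝ) / p) = Real.exp (1 / p) ^ h := by
      rw [← Real.exp_nat_mul]; ring_nf
    rw [this, ← mul_pow]
    exact pow_le_pow_left₀ (mul_nonneg (Real.exp_pos _).le (by linarith)) key h
  have hreal : (K : ℝ) * ((p : ℝ) - 1) ^ h < (p : ℝ) ^ h := by
    have hpos : (0 : ℝ) ≤ ((p : ℝ) - 1) ^ h := pow_nonneg (by linarith) h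
    rcases eq_or_lt_of_le hpos with heq | hlt
    · calc (K : ℝ) * ((p : ℝ) - 1) ^ h = 0 := by rw [← heq]; ring
        _ < (p : ℝ) ^ h := by positivity
    · calc (K : ℝ) * ((p : ℝ) - 1) ^ h < Real.exp ((h : ℝ) / p) * ((p : ℝ) - 1) ^ h :=
          mul_lt_mul_of_pos_right hK hlt
        _ ≤ (p : ℝ) ^ h := hexp
  have hcast : ((p - 1 : ℕ) : ℝ) = (p : ℝ) - 1 := by
    rw [Nat.cast_sub (by omega)]; simp
  rw [← hcast] at hreal
  exact_mod_cast hreal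

/-- Soundness of UENS.  `F ⊆ F_p[x₁,…,x_N]` contains all Boolean axioms
`x_i² - x_i`.  The extension set consists of `K` unstructured extension polynomials
of accuracy `h`: the `e`-th one is `∏_{i ≤ h} (g_{e,i} - r_{idx e i})` in
`F_p[x,r]` (with `r`-variables indexed by `Fin M`), where the variables
`r_{idx e i}` are pairwise distinct and occur in no `g_{e,j}` of the same product
(but may occur in other members).  If `K < e^(h/p)` and `1` lies in the ideal
generated by `F` together with the extension polynomials and all `r^p - r`, then
`F` has no common `{0,1}`-zero. -/
theorem stmt_5 (p N M h K : ℕ) [Fact p.Prime] (hh : 1 ≤ h)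
    (F : Finset (MvPolynomial (Fin N) (ZMod p)))
    (hbool : ∀ i : Fin N, (X i ^ 2 - X i) ∈ F)
    (G : Fin K → Fin h → MvPolynomial (Fin N ⊕ Fin M) (ZMod p))
    (idx : Fin K → Fin h → Fin M)
    (hinj : ∀ e, Function.Injective (idx e))
    (hfresh : ∀ e i j, (Sum.inr (idx e i) : Fin N ⊕ Fin M) ∉ (G e j).vars)
    (hcard : (K : ℝ) < Real.exp ((h : ℝ) / p))
    (hcert : (1 : MvPolynomial (Fin N ⊕ Fin M) (ZMod p)) ∈ Ideal.span
      (((fun f => rename (Sum.inl : Fin N → Fin N ⊕ Fin M) f) '' (F : Set _)) ∪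
       {q | ∃ e : Fin K, q = ∏ i, (G e i - X (Sum.inr (idx e i)))} ∪
       (Set.range fun s : Fin M =>
         (X (Sum.inr s) : MvPolynomial (Fin N ⊕ Fin M) (ZMod p)) ^ p - X (Sum.inr s)))) :
    ¬ ∃ a : Fin N → ZMod p,
      (∀ i, a i = 0 ∨ a i = 1) ∧ ∀ f ∈ F, eval a f = 0 := by
  classical
  have hp : 2 ≤ p := (Fact.out : p.Prime).two_le
  rintro ⟨a, _, haF⟩
  -- find a good assignment for the extension variables
  have hex : ∃ b : Fin M → ZMod p,
      ∀ e : Fin K, ∏ i, (eval (Sum.elim a b) (G e i) - b (idx e i)) = 0 := by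
    rcases Nat.eq_zero_or_pos K with rfl | hK
    · exact ⟨0, fun e => e.elim0⟩
    have hhM : h ≤ M := by
      have := Fintype.card_le_of_injective _ (hinj ⟨0, hK⟩)
      simpa using this
    set v : Fin K → (Fin M → ZMod p) → Fin h → ZMod p :=
      fun e b i => eval (Sum.elim a b) (G e i) with hvdef
    have hv : ∀ e, ∀ b b' : Fin M → ZMod p,
        (∀ s, s ∉ Finset.image (idx e) Finset.univ → b s = b' s) → v e b = v e b' := by
      intro e b b' hbb
      funext i
      refine hom_congr_vars ?_ ?_ rfl
      · ext r
        simp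
      · intro t ht _
        cases t with
        | inl n => simp
        | inr s =>
          simp only [eval_X, Sum.elim_inr]
          refine hbb s ?_
          intro hs
          obtain ⟨i', _, rfl⟩ := Finset.mem_image.mp hs
          exact hfresh e i' i ht
    set Bad : Fin K → Finset (Fin M → ZMod p) :=
      fun e => Finset.univ.filter fun b => ∀ i, v e b i ≠ b (idx e i) with hBad
    have hcount : ∀ e, (Bad e).card ≤ (p - 1) ^ h * p ^ (M - h) :=
      fun e => uens_count_bad p M h (idx e) (hinj e) (v e) (hv e)
    have hlt : (Finset.univ.biUnion Bad).card < (Finset.univ : Finset (Fin M → ZMod p)).card := by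
      have h1 : (Finset.univ.biUnion Bad).card ≤ K * ((p - 1) ^ h * p ^ (M - h)) := by
        calc (Finset.univ.biUnion Bad).card ≤ ∑ e, (Bad e).card := Finset.card_biUnion_le
          _ ≤ ∑ _e : Fin K, (p - 1) ^ h * p ^ (M - h) := Finset.sum_le_sum fun e _ => hcount e
          _ = K * ((p - 1) ^ h * p ^ (M - h)) := by simp [Finset.sum_const, mul_comm]
      have h2 : K * ((p - 1) ^ h * p ^ (M - h)) < p ^ M := by
        have h3 : K * (p - 1) ^ h < p ^ h := uens_exp_bound p h K hp hcard
        calc K * ((p - 1) ^ h * p ^ (M - h)) = K * (p - 1) ^ h * p ^ (M - h) := by ring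
          _ < p ^ h * p ^ (M - h) :=
            Nat.mul_lt_mul_of_pos_right h3 (Nat.pow_pos (by omega))
          _ = p ^ M := by rw [← pow_add]; congr 1; omega
      have h4 : (Finset.univ : Finset (Fin M → ZMod p)).card = p ^ M := by
        simp [ZMod.card]
      omega
    have hexb : ∃ b : Fin M → ZMod p, b ∉ Finset.univ.biUnion Bad := by
      by_contra hcon
      push_neg at hcon
      have hsub : (Finset.univ : Finset (Fin M → ZMod p)) ⊆ Finset.univ.biUnion Bad :=
        fun b _ => hcon b
      exact absurd (Finset.card_le_card hsub) (by omega)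
    obtain ⟨b, hb⟩ := hexb
    refine ⟨b, fun e => ?_⟩
    have : b ∉ Bad e := fun hmem => hb (Finset.mem_biUnion.mpr ⟨e, Finset.mem_univ e, hmem⟩)
    rw [hBad] at this
    simp only [Finset.mem_filter, Finset.mem_univ, true_and, not_forall, not_not] at this
    obtain ⟨i, hi⟩ := this
    exact Finset.prod_eq_zero (Finset.mem_univ i) (by rw [hvdef] at hi; rw [← hi]; ring)
  obtain ⟨b, hb⟩ := hex
  set c : Fin N ⊕ Fin M → ZMod p := Sum.elim a b with hc
  have hker : Ideal.span
      (((fun f => rename (Sum.inl : Fin N → Fin N ⊕ Fin M) f) '' (F : Set _)) ∪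
       {q | ∃ e : Fin K, q = ∏ i, (G e i - X (Sum.inr (idx e i)))} ∪
       (Set.range fun s : Fin M =>
         (X (Sum.inr s) : MvPolynomial (Fin N ⊕ Fin M) (ZMod p)) ^ p - X (Sum.inr s)))
      ≤ RingHom.ker (eval c) := by
    rw [Ideal.span_le]
    rintro q hq
    rw [SetLike.mem_coe, RingHom.mem_ker]
    rcases hq with (⟨f, hf, rfl⟩ | ⟨e, rfl⟩) | ⟨s, rfl⟩
    · rw [eval_rename]
      have : c ∘ Sum.inl = a := by funext n; simp [hc]
      rw [this]
      exact haF f hf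
    · rw [map_prod]
      simp only [map_sub, eval_X]
      have : ∀ i, eval c (G e i) - c (Sum.inr (idx e i))
          = eval c (G e i) - b (idx e i) := by intro i; simp [hc]
      rw [Finset.prod_congr rfl fun i _ => this i]
      exact hb e
    · simp only [map_sub, map_pow, eval_X]
      rw [hc]
      simp [ZMod.pow_card]
  have h1 : (1 : ZMod p) = 0 := by
    have := hker hcert
    rw [RingHom.mem_ker, map_one] at this
    exact this
  haveI : Fact (1 < p) := ⟨by omega⟩
  exact one_ne_zero h1
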